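/- Let n = 2^k, let d < n, and let r be a positive integer with n − r > d and r < d − 1. Let S ⊆ 𝔽_n be a set of r rows. Then for any two distinct monomials α, β ∈ M^S, the leading monomials Lead-Mon(∂_α(NW_d)) and Lead-Mon(∂_β(NW_d)) are multilinear monomials of degree n − r whose distance is at least n − r − d. -/

import Mathlib

open MvPolynomial

/-- Iterated partial derivative along a list of variables. -/
noncomputable def derivList {σ F : Type*} [CommSemiring F]
    (L : List σ) (P : MvPolynomial σ F) : MvPolynomial σ F :=
  L.foldr (fun x Q => MvPolynomial.pderiv x Q) P

/-- The partial derivative `∂_γ P` with respect to the monomial with exponent vector `γ`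
(first-order partial derivatives iterated according to the exponent vector). -/
noncomputable def derivMon {σ F : Type*} [CommSemiring F]
    (γ : σ →₀ ℕ) (P : MvPolynomial σ F) : MvPolynomial σ F :=
  derivList (Finsupp.toMultiset γ).toList P

/-- The Nisan–Wigderson polynomial `NW_d`. -/
noncomputable def NW (F : Type*) [Field F] [Fintype F] (d : ℕ) :
    MvPolynomial (F × F) F :=
  ∑ a : Fin d → F, ∏ i : F, MvPolynomial.X (i, ∑ j : Fin d, a j * i ^ (j : ℕ))

/-- The leading monomial (largest exponent vector in the support) of a polynomial with
respect to a given linear order on monomials; junk value `0` for the zero polynomial. -/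
noncomputable def leadMon {σ F : Type*} [CommSemiring F]
    (lo : LinearOrder (σ →₀ ℕ)) (P : MvPolynomial σ F) : σ →₀ ℕ :=
  WithBot.unbotD 0 (@Finset.max _ lo P.support)

/-- The lexicographic order on the monomials in the variables `x_{i,j}`, `i, j ∈ F`,
induced by ordering the variables as `x_{i₁,j₁} > x_{i₂,j₂}` iff `i₁ < i₂`, or `i₁ = i₂`
and `j₁ < j₂`, under the identification `π` of `F` with `{1, …, n}`. -/
noncomputable def lexMonOrder {F : Type*} {n : ℕ} (π : F ≃ Fin n) :
    LinearOrder ((F × F) →₀ ℕ) :=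
  letI : LinearOrder (F × F) :=
    LinearOrder.lift' (⇑((Equiv.prodCongr π π).trans toLex))
      ((Equiv.prodCongr π π).trans toLex).injective
  LinearOrder.lift' (⇑(toLex : ((F × F) →₀ ℕ) ≃ Lex ((F × F) →₀ ℕ)))
    (toLex : ((F × F) →₀ ℕ) ≃ Lex ((F × F) →₀ ℕ)).injective

open MvPolynomial Polynomial

section Aux

set_option linter.unusedSectionVars false
variable {F : Type} [Field F] [Fintype F] [DecidableEq F]

/-- evaluation of the polynomial with coefficient vector `a` -/
def fev {d : ℕ} (a : Fin d → F) (i : F) : F := ∑ j : Fin d, a j * i ^ (j : ℕ)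

noncomputable def fpoly {d : ℕ} (a : Fin d → F) : Polynomial F :=
  ∑ j : Fin d, Polynomial.C (a j) * Polynomial.X ^ (j : ℕ)

lemma fev_eq_eval {d : ℕ} (a : Fin d → F) (i : F) : fev a i = (fpoly a).eval i := by
  simp [fev, fpoly, Polynomial.eval_finset_sum]

lemma fpoly_natDegree_lt {d : ℕ} (hd : 1 ≤ d) (a : Fin d → F) : (fpoly a).natDegree < d := by
  have h : (fpoly a).natDegree ≤ d - 1 := by
    apply Polynomial.natDegree_sum_le_of_forall_le
    intro j _
    exact le_trans (Polynomial.natDegree_C_mul_X_pow_le _ _) (Nat.le_sub_one_of_lt j.2)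
  omega

lemma fpoly_coeff {d : ℕ} (a : Fin d → F) (j : Fin d) : (fpoly a).coeff (j : ℕ) = a j := by
  rw [fpoly, Polynomial.finset_sum_coeff]
  rw [Finset.sum_eq_single j]
  · simp
  · intro j' _ hj'
    simp only [Polynomial.coeff_C_mul, Polynomial.coeff_X_pow]
    rw [if_neg, mul_zero]
    exact fun h => hj' (Fin.ext h.symm)
  · simp

lemma fpoly_inj {d : ℕ} {a b : Fin d → F} (h : fpoly a = fpoly b) : a = b := by
  funext j
  rw [← fpoly_coeff a j, ← fpoly_coeff b j, h]

/-- two distinct coeff vectors have few agreement points -/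
lemma agree_card_le {d : ℕ} (hd : 1 ≤ d) {a b : Fin d → F} (hab : fpoly a ≠ fpoly b)
    (T : Finset F) (hT : ∀ i ∈ T, fev a i = fev b i) : T.card < d := by
  have hq : fpoly a - fpoly b ≠ 0 := sub_ne_zero.mpr hab
  have hsub : T.val ⊆ (fpoly a - fpoly b).roots := by
    intro i hi
    rw [Polynomial.mem_roots hq]
    have := hT i hi
    rw [fev_eq_eval, fev_eq_eval] at this
    simp [Polynomial.IsRoot, this]
  calc T.card ≤ (fpoly a - fpoly b).natDegree := Polynomial.card_le_degree_of_subset_roots hsub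
    _ ≤ max (fpoly a).natDegree (fpoly b).natDegree := Polynomial.natDegree_sub_le _ _
    _ < d := max_lt (fpoly_natDegree_lt hd a) (fpoly_natDegree_lt hd b)

/-- equal evaluation everywhere implies equal coefficients (when d ≤ |F|) -/
lemma fev_inj {d : ℕ} (hd1 : 1 ≤ d) (hd : d ≤ Fintype.card F) {a b : Fin d → F}
    (h : ∀ i : F, fev a i = fev b i) : a = b := by
  by_contra hab
  have hab' : fpoly a ≠ fpoly b := fun hc => hab (fpoly_inj hc)
  have := agree_card_le hd1 hab' Finset.univ (fun i _ => h i)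
  simp only [Finset.card_univ] at this
  omega

/-- interpolation: given values on S (|S| ≤ d), find a coefficient vector -/
lemma exists_fev_eq {d : ℕ} (hd1 : 1 ≤ d) (S : Finset F) (hSd : S.card ≤ d) (g : F → F) :
    ∃ a : Fin d → F, ∀ i ∈ S, fev a i = g i := by
  set p := Lagrange.interpolate S id g with hp
  have hdeg : p.natDegree < d := by
    rcases eq_or_ne p 0 with h0 | h0
    · rw [h0]; simpa using (show 0 < d by omega)
    · have := Lagrange.degree_interpolate_lt (s := S) (r := g) (Set.injOn_id _)
      rw [← hp] at this
      have := (Polynomial.natDegree_lt_iff_degree_lt h0).mpr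
        (lt_of_lt_of_le this (by exact_mod_cast hSd))
      exact this
  refine ⟨fun j => p.coeff (j : ℕ), fun i hi => ?_⟩
  have hev : p.eval i = g i := Lagrange.eval_interpolate_at_node _ (Set.injOn_id _) hi
  rw [← hev, Polynomial.eval_eq_sum_range' hdeg, fev]
  rw [Finset.sum_range fun m => p.coeff m * i ^ m]

end Aux
open MvPolynomial Polynomial

section Deriv

set_option linter.unusedSectionVars false
variable {F : Type} [Field F] [Fintype F] [DecidableEq F]

/-- exponent vector of the multilinear monomial `∏_{i ∈ T} x_{i, g i}` -/
noncomputable def expOf (T : Finset F) (g : F → F) : (F × F) →₀ ℕ :=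
  ∑ i ∈ T, Finsupp.single (i, g i) 1

lemma expOf_apply (T : Finset F) (g : F → F) (x : F × F) :
    expOf T g x = if x.1 ∈ T ∧ g x.1 = x.2 then 1 else 0 := by
  rw [expOf, Finsupp.finset_sum_apply]
  have h : ∀ i ∈ T, (Finsupp.single (i, g i) (1 : ℕ)) x
      = if i = x.1 then (if g x.1 = x.2 then 1 else 0) else 0 := by
    intro i _
    rw [Finsupp.single_apply]
    by_cases h1 : i = x.1
    · subst h1
      by_cases h2 : g x.1 = x.2 <;> simp [Prod.ext_iff, h2]
    · simp [Prod.ext_iff, h1]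
  rw [Finset.sum_congr rfl h, Finset.sum_ite_eq' T x.1]
  split_ifs with h1 h2 h3 <;> simp_all

lemma expOf_support (T : Finset F) (g : F → F) :
    (expOf T g).support = T.image (fun i => (i, g i)) := by
  ext x
  simp only [Finsupp.mem_support_iff, expOf_apply, Finset.mem_image, ne_eq, ite_eq_right_iff,
    one_ne_zero, imp_false, not_not]
  constructor
  · rintro ⟨h1, h2⟩
    exact ⟨x.1, h1, by rw [h2]⟩
  · rintro ⟨i, hi, rfl⟩
    exact ⟨hi, rfl⟩

lemma expOf_degsum (T : Finset F) (g : F → F) :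
    (expOf T g).sum (fun _ c => c) = T.card := by
  rw [expOf, ← Finsupp.sum_finset_sum_index (by simp) (by simp)]
  simp [Finsupp.sum_single_index]

lemma expOf_support_card (T : Finset F) (g : F → F) :
    (expOf T g).support.card = T.card := by
  rw [expOf_support]
  rw [Finset.card_image_of_injOn]
  intro i _ i' _ h
  exact (Prod.ext_iff.mp h).1

/-- the multilinear monomial `∏_{i ∈ T} x_{i, g i}` -/
noncomputable def monOf (T : Finset F) (g : F → F) : MvPolynomial (F × F) F :=
  monomial (expOf T g) 1

lemma prod_X_eq_monOf (T : Finset F) (g : F → F) :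
    (∏ i ∈ T, (X (i, g i) : MvPolynomial (F × F) F)) = monOf T g := by
  induction T using Finset.induction_on with
  | empty => simp [monOf, expOf]
  | @insert a s ha ih =>
      have hexp : expOf (insert a s) g = Finsupp.single (a, g a) 1 + expOf s g := by
        rw [expOf, expOf, Finset.sum_insert ha]
      rw [Finset.prod_insert ha, ih, monOf, monOf, hexp,
        show (MvPolynomial.X (a, g a) : MvPolynomial (F × F) F)
          = monomial (Finsupp.single (a, g a) 1) 1 from rfl,
        monomial_mul, one_mul]

lemma pderiv_monOf (p : F × F) (T : Finset F) (g : F → F) :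
    pderiv p (monOf T g) =
      if p.1 ∈ T ∧ g p.1 = p.2 then monOf (T.erase p.1) g else 0 := by
  rw [monOf, pderiv_monomial, expOf_apply]
  split_ifs with h
  · have hexp : expOf T g - Finsupp.single p 1 = expOf (T.erase p.1) g := by
      have hp : ((p.1 : F), g p.1) = p := by rw [h.2]
      have h2 : expOf T g = Finsupp.single p 1 + expOf (T.erase p.1) g := by
        rw [expOf, expOf]
        conv_lhs => rw [← Finset.insert_erase h.1]
        rw [Finset.sum_insert (Finset.notMem_erase _ _), hp]
      rw [h2, add_tsub_cancel_left]
    rw [hexp]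
    simp [monOf]
  · simp

lemma derivList_cons (p : F × F) (L : List (F × F)) (P : MvPolynomial (F × F) F) :
    derivList (p :: L) P = pderiv p (derivList L P) := rfl

lemma derivList_zero (L : List (F × F)) : derivList L (0 : MvPolynomial (F × F) F) = 0 := by
  induction L with
  | nil => rfl
  | cons p L ih => rw [derivList_cons, ih, map_zero]

lemma derivList_sum {ι : Type*} (L : List (F × F)) (s : Finset ι)
    (f : ι → MvPolynomial (F × F) F) :
    derivList L (∑ a ∈ s, f a) = ∑ a ∈ s, derivList L (f a) := by
  induction L with
  | nil => rfl
  | cons p L ih => rw [derivList_cons, ih, map_sum]; rfl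

lemma derivList_monOf (L : List (F × F)) (T : Finset F) (g : F → F)
    (hnd : (L.map Prod.fst).Nodup) :
    derivList L (monOf T g) =
      if ∀ p ∈ L, p.1 ∈ T ∧ g p.1 = p.2 then
        monOf (T \ (L.map Prod.fst).toFinset) g else 0 := by
  induction L with
  | nil => simp [derivList]
  | cons p L ih =>
    simp only [List.map_cons, List.nodup_cons] at hnd
    have hp1 : p.1 ∉ L.map Prod.fst := hnd.1
    rw [derivList_cons, ih hnd.2]
    by_cases hL : ∀ q ∈ L, q.1 ∈ T ∧ g q.1 = q.2
    · rw [if_pos hL, pderiv_monOf]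
      by_cases hp : p.1 ∈ T ∧ g p.1 = p.2
      · rw [if_pos ⟨Finset.mem_sdiff.mpr ⟨hp.1, fun hc => hp1 (List.mem_toFinset.mp hc)⟩, hp.2⟩,
          if_pos (by
            intro q hq
            rcases List.mem_cons.mp hq with h | h
            · subst h; exact hp
            · exact hL q h)]
        have hset : (T \ (L.map Prod.fst).toFinset).erase p.1
            = T \ ((p :: L).map Prod.fst).toFinset := by
          ext x
          simp only [Finset.mem_erase, Finset.mem_sdiff, List.mem_toFinset, List.map_cons,
            List.toFinset_cons, Finset.mem_insert]
          tauto
        rw [hset]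
      · rw [if_neg (fun hc => hp ⟨(Finset.mem_sdiff.mp hc.1).1, hc.2⟩),
          if_neg (fun hc => hp (hc p List.mem_cons_self))]
    · rw [if_neg hL, map_zero,
        if_neg (fun hc => hL (fun q hq => hc q (List.mem_cons_of_mem _ hq)))]

end Deriv

section Main

set_option linter.unusedSectionVars false
set_option maxHeartbeats 1000000

variable {F : Type} [Field F] [Fintype F] [DecidableEq F]

lemma sum_singleton_map {ι β : Type*} [DecidableEq β] (s : Finset ι) (h : ι → β) :
    ∑ i ∈ s, ({h i} : Multiset β) = s.val.map h := by
  classical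
  induction s using Finset.induction_on with
  | empty => simp
  | @insert a s ha ih => rw [Finset.sum_insert ha, ih, Finset.insert_val_of_notMem ha,
      Multiset.map_cons]; rfl

lemma NW_eq (d : ℕ) : NW F d = ∑ a : Fin d → F, monOf Finset.univ (fev a) := by
  rw [NW]
  exact Finset.sum_congr rfl fun a _ => prod_X_eq_monOf Finset.univ (fev a)

lemma derivMon_monOf (S : Finset F) (j : {x // x ∈ S} → F) (g : F → F) :
    derivMon (∑ i ∈ S.attach, Finsupp.single ((i : F), j i) 1) (monOf Finset.univ g)
      = if ∀ i : {x // x ∈ S}, g i = j i then monOf Sᶜ g else 0 := by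
  classical
  set γ := ∑ i ∈ S.attach, Finsupp.single ((i : F), j i) (1 : ℕ) with hγ
  have hM : Finsupp.toMultiset γ = S.attach.val.map (fun i : {x // x ∈ S} => ((i : F), j i)) := by
    rw [hγ, Finsupp.toMultiset_sum, ← sum_singleton_map]
    exact Finset.sum_congr rfl fun i _ => by simp [Finsupp.toMultiset_single]
  set L := (Finsupp.toMultiset γ).toList with hL
  have hcoe : (L : Multiset (F × F)) = S.attach.val.map (fun i : {x // x ∈ S} => ((i : F), j i)) := by
    rw [hL, Multiset.coe_toList, hM]
  have hfst : ((L.map Prod.fst : List F) : Multiset F) = S.val := by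
    rw [← Multiset.map_coe, hcoe, Multiset.map_map, Finset.attach_val]
    simp [Function.comp_def]
    exact Multiset.attach_map_val S.val
  have hnd : (L.map Prod.fst).Nodup := by
    rw [← Multiset.coe_nodup, hfst]; exact S.nodup
  have hTF : (L.map Prod.fst).toFinset = S := by
    have : (L.map Prod.fst).toFinset = ((L.map Prod.fst : List F) : Multiset F).toFinset := rfl
    rw [this, hfst, Finset.val_toFinset]
  have hmemL : ∀ p : F × F, p ∈ L ↔ ∃ i : {x // x ∈ S}, ((i : F), j i) = p := by
    intro p
    rw [← Multiset.mem_coe, hcoe, Multiset.mem_map]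
    constructor
    · rintro ⟨i, _, hi⟩; exact ⟨i, hi⟩
    · rintro ⟨i, hi⟩; exact ⟨i, Multiset.mem_attach _ _, hi⟩
  have key := derivList_monOf L Finset.univ g hnd
  rw [hTF] at key
  have hcondiff : (∀ p ∈ L, p.1 ∈ Finset.univ ∧ g p.1 = p.2)
      ↔ (∀ i : {x // x ∈ S}, g (i : F) = j i) := by
    constructor
    · intro h i
      exact (h ((i : F), j i) ((hmemL _).mpr ⟨i, rfl⟩)).2
    · intro h p hp
      obtain ⟨i, rfl⟩ := (hmemL p).mp hp
      exact ⟨Finset.mem_univ _, h i⟩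
  have hdm : derivMon γ (monOf Finset.univ g) = derivList L (monOf Finset.univ g) := rfl
  rw [hdm, key]
  by_cases hcond : ∀ i : {x // x ∈ S}, g (i : F) = j i
  · rw [if_pos (hcondiff.mpr hcond), if_pos hcond, ← Finset.compl_eq_univ_sdiff]
  · rw [if_neg (fun hc => hcond (hcondiff.mp hc)), if_neg hcond]

/-- the set of coefficient vectors matching `j` on `S` -/
def matchSet (d : ℕ) (S : Finset F) (j : {x // x ∈ S} → F) : Finset (Fin d → F) :=
  Finset.univ.filter (fun a : Fin d → F => ∀ i : {x // x ∈ S}, fev a (i : F) = j i)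

lemma derivMon_NW (d : ℕ) (S : Finset F) (j : {x // x ∈ S} → F) :
    derivMon (∑ i ∈ S.attach, Finsupp.single ((i : F), j i) 1) (NW F d)
      = ∑ a ∈ matchSet d S j, monOf Sᶜ (fev a) := by
  have h1 : derivMon (∑ i ∈ S.attach, Finsupp.single ((i : F), j i) 1) (NW F d)
      = ∑ a : Fin d → F, derivMon (∑ i ∈ S.attach, Finsupp.single ((i : F), j i) 1)
          (monOf Finset.univ (fev a)) := by
    rw [NW_eq]
    exact derivList_sum _ _ _
  rw [h1, Finset.sum_congr rfl (fun a _ => derivMon_monOf S j (fev a)), matchSet,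
    ← Finset.sum_filter]

lemma matchSet_inj (d : ℕ) (hd1 : 1 ≤ d) (hdF : d ≤ Fintype.card F)
    (S : Finset F) (j : {x // x ∈ S} → F) :
    ∀ a ∈ matchSet d S j, ∀ b ∈ matchSet d S j,
      expOf Sᶜ (fev a) = expOf Sᶜ (fev b) → a = b := by
  intro a ha b hb heq
  rw [matchSet, Finset.mem_filter] at ha hb
  apply fev_inj hd1 hdF
  intro i
  by_cases hi : i ∈ S
  · rw [ha.2 ⟨i, hi⟩, hb.2 ⟨i, hi⟩]
  · have h1 : expOf Sᶜ (fev a) (i, fev a i) = expOf Sᶜ (fev b) (i, fev a i) := by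
      rw [heq]
    rw [expOf_apply, expOf_apply] at h1
    rw [if_pos (⟨Finset.mem_compl.mpr hi, rfl⟩ : (i, fev a i).1 ∈ Sᶜ ∧ fev a (i, fev a i).1 = (i, fev a i).2)] at h1
    by_cases h2 : fev b i = fev a i
    · exact h2.symm
    · rw [if_neg (fun hc => h2 hc.2)] at h1
      exact absurd h1 one_ne_zero

lemma matchSet_nonempty (d : ℕ) (hd1 : 1 ≤ d) (S : Finset F) (hSd : S.card ≤ d)
    (j : {x // x ∈ S} → F) : (matchSet d S j).Nonempty := by
  classical
  obtain ⟨a, ha⟩ := exists_fev_eq hd1 S hSd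
    (fun i => if h : i ∈ S then j ⟨i, h⟩ else 0)
  refine ⟨a, ?_⟩
  rw [matchSet, Finset.mem_filter]
  refine ⟨Finset.mem_univ _, fun i => ?_⟩
  rw [ha i i.2, dif_pos i.2]

lemma derivMon_NW_support (d : ℕ) (hd1 : 1 ≤ d) (hdF : d ≤ Fintype.card F)
    (S : Finset F) (j : {x // x ∈ S} → F) :
    (derivMon (∑ i ∈ S.attach, Finsupp.single ((i : F), j i) 1) (NW F d)).support
      = (matchSet d S j).image (fun a => expOf Sᶜ (fev a)) := by
  rw [derivMon_NW]
  ext m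
  rw [MvPolynomial.mem_support_iff]
  have hco : MvPolynomial.coeff m (∑ a ∈ matchSet d S j, monOf Sᶜ (fev a))
      = ∑ a ∈ matchSet d S j, if expOf Sᶜ (fev a) = m then (1 : F) else 0 := by
    rw [MvPolynomial.coeff_sum]
    exact Finset.sum_congr rfl fun a _ => MvPolynomial.coeff_monomial _ _ _
  rw [hco]
  by_cases hm : ∃ a ∈ matchSet d S j, expOf Sᶜ (fev a) = m
  · obtain ⟨a₀, ha₀, hm0⟩ := hm
    have : ∑ a ∈ matchSet d S j, (if expOf Sᶜ (fev a) = m then (1 : F) else 0) = 1 := by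
      rw [Finset.sum_eq_single_of_mem a₀ ha₀
        (fun b hb hba => if_neg (fun hc =>
          hba (matchSet_inj d hd1 hdF S j b hb a₀ ha₀ (hc.trans hm0.symm)))), if_pos hm0]
    rw [this]
    simp only [ne_eq, one_ne_zero, not_false_eq_true, true_iff, Finset.mem_image]
    exact ⟨a₀, ha₀, hm0⟩
  · push_neg at hm
    rw [Finset.sum_eq_zero (fun b hb => if_neg (hm b hb))]
    simp only [ne_eq, not_true_eq_false, false_iff, Finset.mem_image, not_exists]
    rintro b ⟨hb, hc⟩
    exact (hm b hb) hc

lemma unbot'_max_mem {β : Type*} [lo : LinearOrder β] [Zero β] (s : Finset β)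
    (hs : s.Nonempty) : WithBot.unbotD 0 s.max ∈ s := by
  obtain ⟨m, hm⟩ := Finset.max_of_nonempty hs
  rw [hm, WithBot.unbotD_coe]
  exact Finset.mem_of_max hm

end Main

section Final

set_option linter.unusedSectionVars false
set_option maxHeartbeats 1000000

variable {F : Type} [Field F] [Fintype F] [DecidableEq F]

lemma final_lemma (k d r : ℕ) (hcard : Fintype.card F = 2 ^ k) (hd1 : 1 ≤ d)
    (hdn : d + r < 2 ^ k) (hrd : r + 1 < d) (S : Finset F) (hS : S.card = r)
    (j₁ j₂ : {x // x ∈ S} → F) (hne : j₁ ≠ j₂) (u v : (F × F) →₀ ℕ)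
    (hu : u ∈ (derivMon (∑ i ∈ S.attach, Finsupp.single ((i : F), j₁ i) 1) (NW F d)).support)
    (hv : v ∈ (derivMon (∑ i ∈ S.attach, Finsupp.single ((i : F), j₂ i) 1) (NW F d)).support) :
    (∀ x, u x ≤ 1) ∧ (∀ x, v x ≤ 1) ∧
    (u.sum fun _ c => c) = 2 ^ k - r ∧ (v.sum fun _ c => c) = 2 ^ k - r ∧
    2 ^ k - r - d ≤ u.support.card - (u.support ∩ v.support).card := by
  have hdF : d ≤ Fintype.card F := by rw [hcard]; omega
  rw [derivMon_NW_support d hd1 hdF S j₁, Finset.mem_image] at hu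
  rw [derivMon_NW_support d hd1 hdF S j₂, Finset.mem_image] at hv
  obtain ⟨a, ha, rfl⟩ := hu
  obtain ⟨b, hb, rfl⟩ := hv
  have hSc : Sᶜ.card = 2 ^ k - r := by rw [Finset.card_compl, hS, hcard]
  refine ⟨?_, ?_, ?_, ?_, ?_⟩
  · intro x; rw [expOf_apply]; split_ifs <;> omega
  · intro x; rw [expOf_apply]; split_ifs <;> omega
  · rw [expOf_degsum, hSc]
  · rw [expOf_degsum, hSc]
  · have hab : fpoly a ≠ fpoly b := by
      have hex : ∃ i : {x // x ∈ S}, j₁ i ≠ j₂ i := by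
        by_contra hc; push_neg at hc; exact hne (funext hc)
      obtain ⟨i, hi⟩ := hex
      intro hc
      apply hi
      rw [matchSet, Finset.mem_filter] at ha hb
      rw [← ha.2 i, ← hb.2 i, fev_eq_eval, fev_eq_eval, hc]
    set T := Sᶜ.filter (fun i => fev a i = fev b i) with hT
    have hTd : T.card < d := agree_card_le hd1 hab T (fun i hi => (Finset.mem_filter.mp hi).2)
    have hsub : (expOf Sᶜ (fev a)).support ∩ (expOf Sᶜ (fev b)).support
        ⊆ T.image (fun i => (i, fev a i)) := by
      intro x hx
      rw [Finset.mem_inter, expOf_support, expOf_support] at hx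
      obtain ⟨hx1, hx2⟩ := hx
      rw [Finset.mem_image] at hx1 hx2 ⊢
      obtain ⟨i, hi, rfl⟩ := hx1
      obtain ⟨i', hi', heq⟩ := hx2
      have h1 : i' = i := (Prod.ext_iff.mp heq).1
      have h2 : fev b i' = fev a i := (Prod.ext_iff.mp heq).2
      rw [h1] at h2
      exact ⟨i, Finset.mem_filter.mpr ⟨hi, h2.symm⟩, rfl⟩
    have hcap : ((expOf Sᶜ (fev a)).support ∩ (expOf Sᶜ (fev b)).support).card ≤ d :=
      le_trans (Finset.card_le_card hsub) (le_trans Finset.card_image_le (le_of_lt hTd))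
    rw [expOf_support_card, hSc]
    exact Nat.sub_le_sub_left hcap (2 ^ k - r)

end Final


/-- Let `n = 2^k`, `d < n`, `r` positive with `n - r > d`, `r < d - 1`,
and `S` a set of `r` rows. For distinct `α, β ∈ M^S`, the leading monomials of
`∂_α NW_d` and `∂_β NW_d` are multilinear monomials of degree `n - r` whose distance is
at least `n - r - d`. -/
theorem stmt6 (k d r : ℕ) (F : Type) [Field F] [Fintype F] [DecidableEq F]
    (hcard : Fintype.card F = 2 ^ k) (hd1 : 1 ≤ d) (hdn : d + r < 2 ^ k)
    (hr : 0 < r) (hrd : r + 1 < d) (π : F ≃ Fin (2 ^ k))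
    (S : Finset F) (hS : S.card = r) (j₁ j₂ : S → F) (hne : j₁ ≠ j₂) :
    letI lo : LinearOrder ((F × F) →₀ ℕ) := lexMonOrder π
    let u := leadMon lo
      (derivMon (∑ i ∈ S.attach, Finsupp.single ((i : F), j₁ i) 1) (NW F d))
    let v := leadMon lo
      (derivMon (∑ i ∈ S.attach, Finsupp.single ((i : F), j₂ i) 1) (NW F d))
    (∀ x, u x ≤ 1) ∧ (∀ x, v x ≤ 1) ∧
    (u.sum fun _ c => c) = 2 ^ k - r ∧ (v.sum fun _ c => c) = 2 ^ k - r ∧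
    2 ^ k - r - d ≤ u.support.card - (u.support ∩ v.support).card := by
  intro u v
  have hdF : d ≤ Fintype.card F := by rw [hcard]; omega
  have hSd : S.card ≤ d := by rw [hS]; omega
  have h1 : (derivMon (∑ i ∈ S.attach, Finsupp.single ((i : F), j₁ i) 1)
      (NW F d)).support.Nonempty := by
    rw [derivMon_NW_support d hd1 hdF S j₁]
    exact (matchSet_nonempty d hd1 S hSd j₁).image _
  have h2 : (derivMon (∑ i ∈ S.attach, Finsupp.single ((i : F), j₂ i) 1)
      (NW F d)).support.Nonempty := by
    rw [derivMon_NW_support d hd1 hdF S j₂]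
    exact (matchSet_nonempty d hd1 S hSd j₂).image _
  exact final_lemma k d r hcard hd1 hdn hrd S hS j₁ j₂ hne u v
    (@unbot'_max_mem _ (lexMonOrder π) _ _ h1) (@unbot'_max_mem _ (lexMonOrder π) _ _ h2)
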